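/- Let E be the extended CMV matrix of a doubly-infinite sequence of Verblunsky coefficients. For n ≥ 1 and j even, the extreme nonzero entries of E^n are products of ρ's: (E^n)_{j, j+2n} = ρ_j ρ_{j+1} ⋯ ρ_{j+2n-1} and (E^n)_{j+1, j-(2n-1)} = ρ_{j-(2n-1)} ρ_{j-(2n-2)} ⋯ ρ_j. -/

import Mathlib

open scoped ComplexConjugate

/-- `ρ_j = √(1 - |α_j|²)`. -/
noncomputable def alRho (α : ℤ → ℂ) (j : ℤ) : ℝ := Real.sqrt (1 - ‖α j‖ ^ 2)

/-- `L̃ = ⊕_{j even} Θ_j`, where `Θ_j = [[conj α_j, ρ_j],[ρ_j, -α_j]]` acts on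
coordinates `j, j+1`. -/
noncomputable def cmvL (α : ℤ → ℂ) (j k : ℤ) : ℂ :=
  if Even j then
    (if k = j then conj (α j) else if k = j + 1 then (alRho α j : ℂ) else 0)
  else
    (if k = j - 1 then (alRho α (j - 1) : ℂ) else if k = j then -α (j - 1) else 0)

/-- `M̃ = ⊕_{j odd} Θ_j`. -/
noncomputable def cmvM (α : ℤ → ℂ) (j k : ℤ) : ℂ :=
  if Odd j then
    (if k = j then conj (α j) else if k = j + 1 then (alRho α j : ℂ) else 0)
  else
    (if k = j - 1 then (alRho α (j - 1) : ℂ) else if k = j then -α (j - 1) else 0)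

/-- The extended CMV matrix `E = L̃ M̃`; the row of `L̃` at `j` is supported in
`{j-1, j, j+1}`, so the matrix product is the displayed finite sum. -/
noncomputable def cmvE (α : ℤ → ℂ) (j k : ℤ) : ℂ :=
  ∑ l ∈ Finset.Icc (j - 1) (j + 1), cmvL α j l * cmvM α l k

/-- Entries of powers `E^n`; the row of `E` at `j` is supported in
`[j-2, j+2]`, so the matrix product is the displayed finite sum. -/
noncomputable def cmvEpow (α : ℤ → ℂ) : ℕ → ℤ → ℤ → ℂ
  | 0, j, k => if j = k then 1 else 0
  | n + 1, j, k => ∑ l ∈ Finset.Icc (j - 2) (j + 2), cmvE α j l * cmvEpow α n l k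

/-- For the extended CMV matrix `E`, `n ≥ 1` and `j` even,
the extreme nonzero entries of `E^n` are products of `ρ`'s:
`(E^n)_{j, j+2n} = ρ_j ρ_{j+1} ⋯ ρ_{j+2n-1}` and
`(E^n)_{j+1, j-(2n-1)} = ρ_{j-(2n-1)} ρ_{j-(2n-2)} ⋯ ρ_j`. -/
lemma cmvM_apply_out (α : ℤ → ℂ) {l k : ℤ} (h : k < l - 1 ∨ l + 1 < k) :
    cmvM α l k = 0 := by
  unfold cmvM; split_ifs <;> first | rfl | omega

lemma cmvEpow_band_hi (α : ℤ → ℂ) :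
    ∀ n : ℕ, ∀ j k : ℤ, j + 2 * n < k → cmvEpow α n j k = 0 := by
  intro n
  induction n with
  | zero =>
    intro j k h
    simp only [cmvEpow]
    rw [if_neg (by omega)]
  | succ n ih =>
    intro j k h
    simp only [cmvEpow]
    apply Finset.sum_eq_zero
    intro l hl
    rw [Finset.mem_Icc] at hl
    rw [ih l k (by push_cast at h ⊢; omega), mul_zero]

lemma cmvEpow_band_lo (α : ℤ → ℂ) :
    ∀ n : ℕ, ∀ j k : ℤ, k < j - 2 * n → cmvEpow α n j k = 0 := by
  intro n
  induction n with
  | zero =>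
    intro j k h
    simp only [cmvEpow]
    rw [if_neg (by omega)]
  | succ n ih =>
    intro j k h
    simp only [cmvEpow]
    apply Finset.sum_eq_zero
    intro l hl
    rw [Finset.mem_Icc] at hl
    rw [ih l k (by push_cast at h ⊢; omega), mul_zero]

lemma cmvE_upper (α : ℤ → ℂ) {j : ℤ} (hj : Even j) :
    cmvE α j (j + 2) = (alRho α j : ℂ) * (alRho α (j + 1) : ℂ) := by
  unfold cmvE
  rw [Finset.sum_eq_single (j + 1)]
  · have h1 : Odd (j + 1) := hj.add_one
    rw [cmvL, if_pos hj, if_neg (by omega), if_pos rfl,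
      cmvM, if_pos h1, if_neg (by omega), if_pos (by ring)]
  · intro b hb hne
    rw [Finset.mem_Icc] at hb
    rw [cmvM_apply_out α (by omega), mul_zero]
  · intro h
    exact absurd (Finset.mem_Icc.mpr ⟨by omega, le_refl _⟩) h

lemma cmvE_lower (α : ℤ → ℂ) {j : ℤ} (hj : Even j) :
    cmvE α (j + 1) (j - 1) = (alRho α j : ℂ) * (alRho α (j - 1) : ℂ) := by
  unfold cmvE
  rw [Finset.sum_eq_single j]
  · have h1 : ¬ Even (j + 1) := by simpa [Int.even_add_one] using hj
    have h2 : ¬ Odd j := by simpa [Int.not_odd_iff_even] using hj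
    rw [cmvL, if_neg h1, if_pos (by ring), cmvM, if_neg h2, if_pos rfl]
    norm_num
  · intro b hb hne
    rw [Finset.mem_Icc] at hb
    rw [cmvM_apply_out α (by omega), mul_zero]
  · intro h
    exact absurd (Finset.mem_Icc.mpr ⟨by omega, by omega⟩) h

lemma cmvEpow_extreme_aux (α : ℤ → ℂ) :
    ∀ n : ℕ, ∀ j : ℤ, Even j →
    cmvEpow α n j (j + 2 * n) = (∏ i ∈ Finset.range (2 * n), (alRho α (j + i) : ℂ)) ∧
    cmvEpow α n (j + 1) (j - (2 * n - 1)) =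
      ∏ i ∈ Finset.range (2 * n), (alRho α (j - (2 * n - 1) + i) : ℂ) := by
  intro n
  induction n with
  | zero =>
    intro j hj
    constructor
    · simp [cmvEpow]
    · simp only [cmvEpow]
      rw [if_pos (by push_cast; ring)]
      simp
  | succ n ih =>
    intro j hj
    constructor
    · -- upper extreme
      simp only [cmvEpow]
      rw [Finset.sum_eq_single (j + 2)]
      · rw [cmvE_upper α hj]
        have h2 : cmvEpow α n (j + 2) (j + 2 * (n + 1 : ℕ)) =
            ∏ i ∈ Finset.range (2 * n), (alRho α ((j + 2) + i) : ℂ) := by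
          have := (ih (j + 2) (hj.add ⟨1, by norm_num⟩)).1
          rw [show j + 2 * ((n+1 : ℕ) : ℤ) = (j + 2) + 2 * n by push_cast; ring]
          exact this
        rw [h2]
        have hp : ∏ i ∈ Finset.range (2 * (n+1)), (alRho α (j + i) : ℂ)
            = ((∏ i ∈ Finset.range (2 * n), (alRho α (j + 2 + i) : ℂ)) *
              (alRho α (j + 1) : ℂ)) * (alRho α j : ℂ) := by
          rw [show 2 * (n+1) = (2*n+1)+1 by ring, Finset.prod_range_succ',
            Finset.prod_range_succ']
          congr 2
          · apply Finset.prod_congr rfl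
            intro i _
            push_cast
            ring_nf
          all_goals norm_num
        rw [hp]
        ring
      · intro b hb hne
        rw [Finset.mem_Icc] at hb
        rw [cmvEpow_band_hi α n b _ (by push_cast; omega), mul_zero]
      · intro h
        exact absurd (Finset.mem_Icc.mpr ⟨by omega, le_refl _⟩) h
    · -- lower extreme
      simp only [cmvEpow]
      rw [Finset.sum_eq_single (j - 1)]
      · rw [cmvE_lower α hj]
        have hjm2 : Even (j - 2) := by
          obtain ⟨r, hr⟩ := hj; exact ⟨r - 1, by omega⟩
        have h2 := (ih (j - 2) hjm2).2
        rw [show (j - 2) + 1 = j - 1 from by ring] at h2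
        rw [show j - (2 * ((n+1:ℕ):ℤ) - 1) = (j - 2) - (2 * n - 1) from by push_cast; ring,
          h2]
        have hp : ∏ i ∈ Finset.range (2 * (n+1)),
              (alRho α ((j - 2) - (2 * (n:ℤ) - 1) + i) : ℂ)
            = ((∏ i ∈ Finset.range (2 * n), (alRho α (j - 2 - (2 * (n:ℤ) - 1) + i) : ℂ)) *
              (alRho α (j - 1) : ℂ)) * (alRho α j : ℂ) := by
          rw [show 2 * (n+1) = (2*n)+1+1 by ring, Finset.prod_range_succ,
            Finset.prod_range_succ]
          congr 2
          all_goals (push_cast; ring_nf)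
        rw [hp]
        ring
      · intro b hb hne
        rw [Finset.mem_Icc] at hb
        rw [cmvEpow_band_lo α n b _ (by push_cast; omega), mul_zero]
      · intro h
        exact absurd (Finset.mem_Icc.mpr ⟨by omega, by omega⟩) h

theorem cmvEpow_extreme_entries (α : ℤ → ℂ) (hα : ∀ j, ‖α j‖ < 1)
    (n : ℕ) (hn : 1 ≤ n) (j : ℤ) (hj : Even j) :
    cmvEpow α n j (j + 2 * n) = ∏ i ∈ Finset.range (2 * n), (alRho α (j + i) : ℂ) ∧
    cmvEpow α n (j + 1) (j - (2 * n - 1)) =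
      ∏ i ∈ Finset.range (2 * n), (alRho α (j - (2 * n - 1) + i) : ℂ) := by
  exact cmvEpow_extreme_aux α n j hj
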